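/- A set function F : 2^V → ℝ is submodular if and only if its Lovász extension f : ℝ^N → ℝ is convex. -/

import Mathlib

open scoped Classical
open MeasureTheory

/-- The Lovász extension of a set function `F` (with `F ∅ = 0`), defined equivalently to the
sorted telescoping sum `f(x) = Σ_{j=1}^{N-1} F(S_j)(x_{i_j} - x_{i_{j+1}}) + F(V) x_{i_N}`
via the level-set integral formula. -/
noncomputable def lovasz {α : Type*} [Fintype α] (F : Set α → ℝ) (x : α → ℝ) : ℝ :=
  (⨅ i, x i) * F Set.univ +
    ∫ t in Set.Ioc (⨅ i, x i) (⨆ i, x i), F {i | t < x i}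

/-- `F(S₁) + F(S₂) ≥ F(S₁ ∪ S₂) + F(S₁ ∩ S₂)`. -/
def Submodular {α : Type*} (F : Set α → ℝ) : Prop :=
  ∀ A B : Set α, F (A ∪ B) + F (A ∩ B) ≤ F A + F B

section Aux
open Set

lemma integral_aeconst {g : ℝ → ℝ} {a b c : ℝ} (hab : a ≤ b)
    (h : ∀ t ∈ Set.Ioo a b, g t = c) :
    IntegrableOn g (Set.Ioc a b) ∧ ∫ t in Set.Ioc a b, g t = (b - a) * c := by
  have h2 : ∀ᵐ (t : ℝ), t ≠ b := by
    rw [ae_iff]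
    simpa using Real.volume_singleton (x := b)
  have hae : g =ᵐ[volume.restrict (Set.Ioc a b)] fun _ => c := by
    filter_upwards [ae_restrict_mem measurableSet_Ioc, ae_restrict_of_ae h2] with t ht hneb
    exact h t ⟨ht.1, lt_of_le_of_ne ht.2 hneb⟩
  have hint : IntegrableOn g (Set.Ioc a b) :=
    (integrableOn_const (μ := volume) (s := Set.Ioc a b) (C := c) measure_Ioc_lt_top.ne).congr hae.symm
  refine ⟨hint, ?_⟩
  rw [integral_congr_ae hae, setIntegral_const, Real.volume_real_Ioc, smul_eq_mul,
    max_eq_left (sub_nonneg.2 hab)]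

lemma integral_Ioc_split {g : ℝ → ℝ} {a b c : ℝ} (hab : a ≤ b) (hbc : b ≤ c)
    (h1 : IntegrableOn g (Set.Ioc a b)) (h2 : IntegrableOn g (Set.Ioc b c)) :
    ∫ t in Set.Ioc a c, g t = (∫ t in Set.Ioc a b, g t) + ∫ t in Set.Ioc b c, g t := by
  rw [← Set.Ioc_union_Ioc_eq_Ioc hab hbc]
  exact setIntegral_union (Set.Ioc_disjoint_Ioc_of_le le_rfl) measurableSet_Ioc h1 h2

variable {N : ℕ}

/-- permutation sorting `x` in decreasing order -/
noncomputable def sp (x : Fin N → ℝ) : Equiv.Perm (Fin N) := Tuple.sort (fun i => -x i)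

lemma sp_antitone (x : Fin N → ℝ) {k l : Fin N} (hkl : k ≤ l) : x (sp x l) ≤ x (sp x k) := by
  have := Tuple.monotone_sort (fun i => -x i) hkl
  simpa [sp] using this

/-- chain sets of x : the j largest coordinates -/
def cS (x : Fin N → ℝ) (j : ℕ) : Set (Fin N) := {i | ((sp x).symm i : ℕ) < j}

lemma cS_zero (x : Fin N → ℝ) : cS x 0 = ∅ := by ext i; simp [cS]

lemma cS_top (x : Fin N → ℝ) {j : ℕ} (hj : N ≤ j) : cS x j = Set.univ := by
  ext i; simp only [cS, Set.mem_setOf_eq, Set.mem_univ, iff_true]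
  exact lt_of_lt_of_le ((sp x).symm i).isLt hj

lemma cS_succ (x : Fin N → ℝ) {k : ℕ} (hk : k < N) :
    cS x (k + 1) = cS x k ∪ {sp x ⟨k, hk⟩} := by
  ext i
  simp only [cS, Set.mem_setOf_eq, Set.mem_union, Set.mem_singleton_iff, Nat.lt_succ_iff]
  constructor
  · intro h
    rcases lt_or_eq_of_le h with h' | h'
    · exact Or.inl h'
    · right
      have : (sp x).symm i = ⟨k, hk⟩ := Fin.ext h'
      rw [← this]; simp
  · rintro (h | rfl)
    · exact le_of_lt h
    · simp
lemma not_mem_cS_self (x : Fin N → ℝ) {k : ℕ} (hk : k < N) :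
    sp x ⟨k, hk⟩ ∉ cS x k := by simp [cS]

/-- decreasing sequence of sorted values, extended constantly -/
noncomputable def bb (hN : 0 < N) (x : Fin N → ℝ) (k : ℕ) : ℝ :=
  x (sp x ⟨min k (N - 1), by omega⟩)

lemma bb_of_lt (hN : 0 < N) (x : Fin N → ℝ) {k : ℕ} (hk : k < N) :
    bb hN x k = x (sp x ⟨k, hk⟩) := by
  have : min k (N - 1) = k := by omega
  simp [bb, this]

lemma bb_antitone (hN : 0 < N) (x : Fin N → ℝ) {k l : ℕ} (hkl : k ≤ l) :
    bb hN x l ≤ bb hN x k := by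
  apply sp_antitone
  simp only [Fin.mk_le_mk]
  omega

lemma bb_stable (hN : 0 < N) (x : Fin N → ℝ) {k : ℕ} (hk : N - 1 ≤ k) :
    bb hN x k = bb hN x (N - 1) := by
  have : min k (N-1) = N - 1 := by omega
  have h2 : min (N-1) (N-1) = N - 1 := by omega
  simp [bb, this, h2]

lemma iInf_eq_bb (hN : 0 < N) (x : Fin N → ℝ) : (⨅ i, x i) = bb hN x (N - 1) := by
  haveI : Nonempty (Fin N) := ⟨⟨0, hN⟩⟩
  apply le_antisymm
  · exact ciInf_le (Finite.bddBelow_range x) _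
  · apply le_ciInf
    intro i
    have : x i = x (sp x ((sp x).symm i)) := by simp
    rw [this, bb]
    apply sp_antitone
    simp only [Fin.mk_le_mk, Fin.le_def]
    have := ((sp x).symm i).isLt
    omega

lemma iSup_eq_bb (hN : 0 < N) (x : Fin N → ℝ) : (⨆ i, x i) = bb hN x 0 := by
  haveI : Nonempty (Fin N) := ⟨⟨0, hN⟩⟩
  apply le_antisymm
  · apply ciSup_le
    intro i
    have : x i = x (sp x ((sp x).symm i)) := by simp
    rw [this, bb]
    apply sp_antitone
    simp [Fin.le_def]
  · exact le_ciSup (Finite.bddAbove_range x) _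

lemma levelset_eq (hN : 0 < N) (x : Fin N → ℝ) {k : ℕ} {t : ℝ}
    (ht : t ∈ Set.Ioo (bb hN x (k + 1)) (bb hN x k)) (hk : k + 1 < N) :
    {i | t < x i} = cS x (k + 1) := by
  ext i
  simp only [Set.mem_setOf_eq, cS]
  constructor
  · intro h
    by_contra hc
    push_neg at hc
    have h1 : k + 1 ≤ ((sp x).symm i : ℕ) := hc
    have : x i ≤ bb hN x (k + 1) := by
      have : x i = x (sp x ((sp x).symm i)) := by simp
      rw [this, bb_of_lt hN x hk]
      apply sp_antitone
      simpa [Fin.le_def] using h1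
    linarith [ht.1]
  · intro h
    have h1 : ((sp x).symm i : ℕ) ≤ k := by omega
    have : bb hN x k ≤ x i := by
      have h2 : x i = x (sp x ((sp x).symm i)) := by simp
      rw [h2, bb]
      apply sp_antitone
      simp only [Fin.le_def]
      have := ((sp x).symm i).isLt
      omega
    linarith [ht.2]

lemma abel_sum (c d : ℕ → ℝ) (n : ℕ) :
    ∑ k ∈ Finset.range n, (c (k+1) - c k) * d k =
      (∑ k ∈ Finset.range n, c (k+1) * (d k - d (k+1))) + c n * d n - c 0 * d 0 := by
  induction n with
  | zero => simp
  | succ n ih => rw [Finset.sum_range_succ, Finset.sum_range_succ, ih]; ring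

lemma integral_formula (hN : 0 < N) (F : Set (Fin N) → ℝ) (x : Fin N → ℝ) :
    lovasz F x = (∑ k ∈ Finset.range N, F (cS x (k+1)) * (bb hN x k - bb hN x (k+1)))
      + F Set.univ * bb hN x (N-1) := by
  set g : ℝ → ℝ := fun t => F {i | t < x i} with hg
  have main : ∀ m, m ≤ N - 1 →
      IntegrableOn g (Set.Ioc (bb hN x m) (bb hN x 0)) ∧
      (∫ t in Set.Ioc (bb hN x m) (bb hN x 0), g t) =
        ∑ k ∈ Finset.range m, F (cS x (k+1)) * (bb hN x k - bb hN x (k+1)) := by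
    intro m
    induction m with
    | zero => intro _; simp
    | succ m ih =>
      intro hm
      have hm' : m ≤ N - 1 := by omega
      have hmN : m + 1 < N := by omega
      obtain ⟨ihInt, ihEq⟩ := ih hm'
      have hmono : bb hN x (m+1) ≤ bb hN x m := bb_antitone hN x (by omega)
      have hmono0 : bb hN x m ≤ bb hN x 0 := bb_antitone hN x (by omega)
      have piece := integral_aeconst (g := g) (c := F (cS x (m+1))) hmono
        (fun t ht => by rw [hg]; simp only []; rw [levelset_eq hN x ht hmN])
      constructor
      · rw [← Set.Ioc_union_Ioc_eq_Ioc hmono hmono0]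
        exact piece.1.union ihInt
      · rw [integral_Ioc_split hmono hmono0 piece.1 ihInt, piece.2, ihEq,
          Finset.sum_range_succ]
        ring
  have hNsum : N = (N - 1) + 1 := by omega
  have last : F (cS x ((N-1)+1)) * (bb hN x (N-1) - bb hN x ((N-1)+1)) = 0 := by
    rw [bb_stable hN x (k := (N-1)+1) (by omega)]; ring
  rw [lovasz, iInf_eq_bb hN x, iSup_eq_bb hN x, (main (N-1) le_rfl).2]
  have hrange : Finset.range N = insert (N-1) (Finset.range (N-1)) := by
    conv_lhs => rw [hNsum]
    exact Finset.range_add_one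
  rw [hrange, Finset.sum_insert Finset.notMem_range_self, last]
  ring

noncomputable def sSum (s : Fin N → ℝ) (A : Set (Fin N)) : ℝ :=
  ∑ i ∈ Finset.univ.filter (· ∈ A), s i

lemma sSum_empty (s : Fin N → ℝ) : sSum s (∅ : Set (Fin N)) = 0 := by simp [sSum]

lemma sSum_univ (s : Fin N → ℝ) : sSum s (Set.univ : Set (Fin N)) = ∑ i, s i := by simp [sSum]

lemma sSum_insert (s : Fin N → ℝ) {B : Set (Fin N)} {i0 : Fin N} (h : i0 ∉ B) :
    sSum s (insert i0 B) = s i0 + sSum s B := by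
  unfold sSum
  rw [Finset.sum_filter, Finset.sum_filter]
  trans (∑ a : Fin N, ((if a = i0 then s a else 0) + if a ∈ B then s a else 0))
  · refine Finset.sum_congr rfl (fun i _ => ?_)
    by_cases h1 : i = i0
    · subst h1; simp [h]
    · by_cases h2 : i ∈ B <;> simp [h1, h2, Set.mem_insert_iff]
  · rw [Finset.sum_add_distrib, Finset.sum_ite_eq']
    simp

lemma sSum_cS_succ (hN : 0 < N) (s : Fin N → ℝ) (x : Fin N → ℝ) {k : ℕ} (hk : k < N) :
    sSum s (cS x (k+1)) = s (sp x ⟨k, hk⟩) + sSum s (cS x k) := by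
  have h1 : cS x (k+1) = insert (sp x ⟨k, hk⟩) (cS x k) := by
    rw [cS_succ x hk]; ext i; simp [or_comm]
  rw [h1, sSum_insert s (not_mem_cS_self x hk)]

lemma inner_eq (hN : 0 < N) (x s : Fin N → ℝ) :
    ∑ i, s i * x i = ∑ k ∈ Finset.range N,
      (sSum s (cS x (k+1)) - sSum s (cS x k)) * bb hN x k := by
  have h1 : ∑ i, s i * x i = ∑ k : Fin N, s (sp x k) * x (sp x k) :=
    (Equiv.sum_comp (sp x) (fun i => s i * x i)).symm
  rw [h1, ← Fin.sum_univ_eq_sum_range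
    (fun k => (sSum s (cS x (k+1)) - sSum s (cS x k)) * bb hN x k) N]
  apply Finset.sum_congr rfl
  intro k _
  rw [sSum_cS_succ hN s x k.isLt, bb_of_lt hN x k.isLt]
  simp

lemma inner_le_lovasz (hN : 0 < N) (F : Set (Fin N) → ℝ) (hF0 : F ∅ = 0) (s x : Fin N → ℝ)
    (hA : ∀ A : Set (Fin N), sSum s A ≤ F A) (hV : sSum s Set.univ = F Set.univ) :
    ∑ i, s i * x i ≤ lovasz F x := by
  rw [inner_eq hN x s, abel_sum (fun k => sSum s (cS x k)) (bb hN x) N,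
    integral_formula hN F x]
  simp only [cS_zero, cS_top x (le_refl N), sSum_empty, hV]
  rw [bb_stable hN x (k := N) (by omega)]
  have hsum : (∑ k ∈ Finset.range N, sSum s (cS x (k+1)) * (bb hN x k - bb hN x (k+1)))
      ≤ ∑ k ∈ Finset.range N, F (cS x (k+1)) * (bb hN x k - bb hN x (k+1)) := by
    apply Finset.sum_le_sum
    intro k _
    exact mul_le_mul_of_nonneg_right (hA _) (sub_nonneg.2 (bb_antitone hN x (by omega)))
  linarith

noncomputable def greedy (F : Set (Fin N) → ℝ) (x : Fin N → ℝ) (i : Fin N) : ℝ :=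
  F (cS x (((sp x).symm i : ℕ) + 1)) - F (cS x ((sp x).symm i))

lemma greedy_apply (F : Set (Fin N) → ℝ) (x : Fin N → ℝ) {k : ℕ} (hk : k < N) :
    greedy F x (sp x ⟨k, hk⟩) = F (cS x (k+1)) - F (cS x k) := by
  simp [greedy]

lemma sSum_greedy_cS (hN : 0 < N) (F : Set (Fin N) → ℝ) (hF0 : F ∅ = 0) (x : Fin N → ℝ) :
    ∀ j, j ≤ N → sSum (greedy F x) (cS x j) = F (cS x j) := by
  intro j
  induction j with
  | zero => intro _; rw [cS_zero, sSum_empty, hF0]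
  | succ j ih =>
    intro hj
    have hjN : j < N := by omega
    rw [sSum_cS_succ hN _ x hjN, greedy_apply F x hjN, ih (by omega)]
    ring

lemma lovasz_eq_inner_greedy (hN : 0 < N) (F : Set (Fin N) → ℝ) (hF0 : F ∅ = 0)
    (x : Fin N → ℝ) :
    lovasz F x = ∑ i, greedy F x i * x i := by
  rw [inner_eq hN x (greedy F x), abel_sum (fun k => sSum (greedy F x) (cS x k)) (bb hN x) N,
    integral_formula hN F x]
  simp only [cS_zero, sSum_empty, hF0]
  rw [sSum_greedy_cS hN F hF0 x N le_rfl, cS_top x le_rfl,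
    bb_stable hN x (k := N) (by omega)]
  have : ∀ k ∈ Finset.range N,
      F (cS x (k+1)) * (bb hN x k - bb hN x (k+1)) =
      sSum (greedy F x) (cS x (k+1)) * (bb hN x k - bb hN x (k+1)) := by
    intro k hk
    rw [sSum_greedy_cS hN F hF0 x (k+1) (Finset.mem_range.1 hk)]
  rw [Finset.sum_congr rfl this]
  ring

lemma greedy_le (hN : 0 < N) (F : Set (Fin N) → ℝ) (hF0 : F ∅ = 0)
    (hSub : ∀ A B : Set (Fin N), F (A ∪ B) + F (A ∩ B) ≤ F A + F B)
    (x : Fin N → ℝ) (A : Set (Fin N)) : sSum (greedy F x) A ≤ F A := by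
  have key : ∀ j, j ≤ N → sSum (greedy F x) (A ∩ cS x j) ≤ F (A ∩ cS x j) := by
    intro j
    induction j with
    | zero => intro _; rw [cS_zero]; simp [sSum_empty, hF0]
    | succ j ih =>
      intro hj
      have hjN : j < N := by omega
      set i0 := sp x ⟨j, hjN⟩ with hi0
      by_cases hmem : i0 ∈ A
      · have hset : A ∩ cS x (j+1) = insert i0 (A ∩ cS x j) := by
          rw [cS_succ x hjN]; ext i
          simp only [Set.mem_inter_iff, Set.mem_union, Set.mem_singleton_iff,
            Set.mem_insert_iff]
          constructor
          · rintro ⟨hiA, hiC | rfl⟩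
            · exact Or.inr ⟨hiA, hiC⟩
            · exact Or.inl rfl
          · rintro (rfl | ⟨hiA, hiC⟩)
            · exact ⟨hmem, Or.inr rfl⟩
            · exact ⟨hiA, Or.inl hiC⟩
        have hnot : i0 ∉ A ∩ cS x j := fun h => not_mem_cS_self x hjN h.2
        have hsub : F (cS x (j+1)) + F (A ∩ cS x j) ≤ F (cS x j) + F (A ∩ cS x (j+1)) := by
          have hu : cS x j ∪ (A ∩ cS x (j+1)) = cS x (j+1) := by
            rw [cS_succ x hjN]; ext i
            simp only [Set.mem_union, Set.mem_inter_iff, Set.mem_singleton_iff]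
            constructor
            · rintro (h | ⟨_, h⟩)
              · exact Or.inl h
              · rcases h with h | h
                · exact Or.inl h
                · exact Or.inr h
            · rintro (h | h)
              · exact Or.inl h
              · exact Or.inr ⟨h ▸ hmem, Or.inr h⟩
          have hi : cS x j ∩ (A ∩ cS x (j+1)) = A ∩ cS x j := by
            rw [cS_succ x hjN]; ext i
            simp only [Set.mem_inter_iff, Set.mem_union, Set.mem_singleton_iff]
            constructor
            · rintro ⟨h1, h2, _⟩; exact ⟨h2, h1⟩
            · rintro ⟨h1, h2⟩
              refine ⟨h2, h1, Or.inl h2⟩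
          have := hSub (cS x j) (A ∩ cS x (j+1))
          rw [hu, hi] at this
          linarith
        rw [hset] at hsub ⊢
        rw [sSum_insert _ hnot, hi0, greedy_apply F x hjN]
        have := ih (by omega)
        linarith
      · have hset : A ∩ cS x (j+1) = A ∩ cS x j := by
          rw [cS_succ x hjN]; ext i
          simp only [Set.mem_inter_iff, Set.mem_union, Set.mem_singleton_iff]
          constructor
          · rintro ⟨h1, h2 | rfl⟩
            · exact ⟨h1, h2⟩
            · exact absurd h1 hmem
          · rintro ⟨h1, h2⟩; exact ⟨h1, Or.inl h2⟩
        rw [hset]; exact ih (by omega)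
  have := key N le_rfl
  rwa [cS_top x le_rfl, Set.inter_univ] at this

lemma greedy_univ (hN : 0 < N) (F : Set (Fin N) → ℝ) (hF0 : F ∅ = 0) (x : Fin N → ℝ) :
    sSum (greedy F x) Set.univ = F Set.univ := by
  have := sSum_greedy_cS hN F hF0 x N le_rfl
  rwa [cS_top x le_rfl] at this

lemma submodular_convex (hN : 0 < N) (F : Set (Fin N) → ℝ) (hF0 : F ∅ = 0)
    (hSub : ∀ A B : Set (Fin N), F (A ∪ B) + F (A ∩ B) ≤ F A + F B) :
    ConvexOn ℝ Set.univ (lovasz F) := by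
  refine ⟨convex_univ, fun x _ y _ a b ha hb hab => ?_⟩
  set m := a • x + b • y with hmdef
  have hm : lovasz F m = ∑ i, greedy F m i * m i := lovasz_eq_inner_greedy hN F hF0 m
  have hx : ∑ i, greedy F m i * x i ≤ lovasz F x :=
    inner_le_lovasz hN F hF0 _ x (greedy_le hN F hF0 hSub m) (greedy_univ hN F hF0 m)
  have hy : ∑ i, greedy F m i * y i ≤ lovasz F y :=
    inner_le_lovasz hN F hF0 _ y (greedy_le hN F hF0 hSub m) (greedy_univ hN F hF0 m)
  have hsplit : ∑ i, greedy F m i * m i =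
      a * (∑ i, greedy F m i * x i) + b * (∑ i, greedy F m i * y i) := by
    rw [Finset.mul_sum, Finset.mul_sum, ← Finset.sum_add_distrib]
    refine Finset.sum_congr rfl fun i _ => ?_
    simp only [hmdef, Pi.add_apply, Pi.smul_apply, smul_eq_mul]
    ring
  rw [smul_eq_mul, smul_eq_mul, hm, hsplit]
  have h1 : a * (∑ i, greedy F m i * x i) ≤ a * lovasz F x :=
    mul_le_mul_of_nonneg_left hx ha
  have h2 : b * (∑ i, greedy F m i * y i) ≤ b * lovasz F y :=
    mul_le_mul_of_nonneg_left hy hb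
  linarith

lemma lovasz_half (hN : 0 < N) (F : Set (Fin N) → ℝ) (hF0 : F ∅ = 0)
    {C D : Set (Fin N)} (hCD : C ⊆ D) :
    lovasz F (fun i => ((if i ∈ D then (1:ℝ) else 0) + (if i ∈ C then 1 else 0))/2)
      = (F D + F C)/2 := by
  haveI : Nonempty (Fin N) := ⟨⟨0, hN⟩⟩
  set x : Fin N → ℝ := fun i => ((if i ∈ D then (1:ℝ) else 0) + (if i ∈ C then 1 else 0))/2
    with hxdef
  have hx1 : ∀ i, i ∈ C → x i = 1 := fun i hi => by simp [hxdef, hi, hCD hi]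
  have hx2 : ∀ i, i ∈ D → i ∉ C → x i = 1/2 := fun i hi hc => by simp [hxdef, hi, hc]
  have hx3 : ∀ i, i ∉ D → x i = 0 := by
    intro i hi
    have hc : i ∉ C := fun hc => hi (hCD hc)
    simp [hxdef, hi, hc]
  by_cases hCu : C = Set.univ
  · -- x ≡ 1
    have hDu : D = Set.univ := Set.eq_univ_of_univ_subset (hCu ▸ hCD)
    have hx : x = fun _ => 1 := funext fun i => hx1 i (hCu ▸ Set.mem_univ i)
    rw [lovasz, hx]
    simp [ciInf_const, ciSup_const, hCu, hDu]
  by_cases hDe : D = ∅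
  · -- x ≡ 0
    have hCe : C = ∅ := Set.eq_empty_of_subset_empty (hDe ▸ hCD)
    have hx : x = fun _ => 0 := funext fun i => hx3 i (hDe ▸ notMem_empty i)
    rw [lovasz, hx]
    simp [ciInf_const, ciSup_const, hDe, hCe, hF0]
  by_cases hDu : D = Set.univ
  · -- inf = 1/2
    have hinf : (⨅ i, x i) = 1/2 := by
      obtain ⟨i0, hi0⟩ := Set.ne_univ_iff_exists_notMem C |>.1 hCu
      apply le_antisymm
      · exact (hx2 i0 (hDu ▸ Set.mem_univ i0) hi0) ▸ ciInf_le (Finite.bddBelow_range x) i0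
      · refine le_ciInf fun i => ?_
        by_cases hc : i ∈ C
        · rw [hx1 i hc]; norm_num
        · rw [hx2 i (hDu ▸ Set.mem_univ i) hc]
    by_cases hCe : C = ∅
    · -- x ≡ 1/2
      have hx : x = fun _ => 1/2 := funext fun i =>
        hx2 i (hDu ▸ Set.mem_univ i) (hCe ▸ notMem_empty i)
      rw [lovasz, hx]
      simp [ciInf_const, ciSup_const, hDu, hCe, hF0]
      ring
    · -- sup = 1
      have hsup : (⨆ i, x i) = 1 := by
        obtain ⟨i0, hi0⟩ := Set.nonempty_iff_ne_empty.2 hCe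
        apply le_antisymm
        · refine ciSup_le fun i => ?_
          by_cases hc : i ∈ C
          · rw [hx1 i hc]
          · rw [hx2 i (hDu ▸ Set.mem_univ i) hc]; norm_num
        · exact (hx1 i0 hi0) ▸ le_ciSup (Finite.bddAbove_range x) i0
      have hlevel : ∀ t ∈ Set.Ioo (1/2 : ℝ) 1, F {i | t < x i} = F C := by
        intro t ht
        congr 1
        ext i
        simp only [Set.mem_setOf_eq]
        constructor
        · intro h
          by_contra hc
          rw [hx2 i (hDu ▸ Set.mem_univ i) hc] at h
          linarith [ht.1]
        · intro hc
          rw [hx1 i hc]; exact ht.2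
      have := integral_aeconst (g := fun t => F {i | t < x i}) (a := 1/2) (b := 1)
        (c := F C) (by norm_num) hlevel
      rw [lovasz, hinf, hsup, this.2, hDu]
      ring
  · -- D ≠ univ : inf = 0
    have hinf : (⨅ i, x i) = 0 := by
      obtain ⟨i0, hi0⟩ := Set.ne_univ_iff_exists_notMem D |>.1 hDu
      apply le_antisymm
      · exact (hx3 i0 hi0) ▸ ciInf_le (Finite.bddBelow_range x) i0
      · refine le_ciInf fun i => ?_
        simp only [hxdef]
        positivity
    have hlevlow : ∀ t ∈ Set.Ioo (0:ℝ) (1/2), F {i | t < x i} = F D := by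
      intro t ht
      congr 1
      ext i
      simp only [Set.mem_setOf_eq]
      constructor
      · intro h
        by_contra hd
        rw [hx3 i hd] at h
        linarith [ht.1]
      · intro hd
        by_cases hc : i ∈ C
        · rw [hx1 i hc]; linarith [ht.2]
        · rw [hx2 i hd hc]; exact ht.2
    by_cases hCe : C = ∅
    · -- sup = 1/2
      have hsup : (⨆ i, x i) = 1/2 := by
        obtain ⟨i0, hi0⟩ := Set.nonempty_iff_ne_empty.2 hDe
        apply le_antisymm
        · refine ciSup_le fun i => ?_
          by_cases hd : i ∈ D
          · rw [hx2 i hd (hCe ▸ notMem_empty i)]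
          · rw [hx3 i hd]; norm_num
        · exact (hx2 i0 hi0 (hCe ▸ notMem_empty i0)) ▸ le_ciSup (Finite.bddAbove_range x) i0
      have := integral_aeconst (g := fun t => F {i | t < x i}) (a := 0) (b := 1/2)
        (c := F D) (by norm_num) hlevlow
      rw [lovasz, hinf, hsup, this.2, hCe, hF0]
      ring
    · -- sup = 1
      have hsup : (⨆ i, x i) = 1 := by
        obtain ⟨i0, hi0⟩ := Set.nonempty_iff_ne_empty.2 hCe
        apply le_antisymm
        · refine ciSup_le fun i => ?_
          by_cases hc : i ∈ C
          · rw [hx1 i hc]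
          · by_cases hd : i ∈ D
            · rw [hx2 i hd hc]; norm_num
            · rw [hx3 i hd]; norm_num
        · exact (hx1 i0 hi0) ▸ le_ciSup (Finite.bddAbove_range x) i0
      have hlevhigh : ∀ t ∈ Set.Ioo (1/2 : ℝ) 1, F {i | t < x i} = F C := by
        intro t ht
        congr 1
        ext i
        simp only [Set.mem_setOf_eq]
        constructor
        · intro h
          by_contra hc
          by_cases hd : i ∈ D
          · rw [hx2 i hd hc] at h; linarith [ht.1]
          · rw [hx3 i hd] at h; linarith [ht.1]
        · intro hc
          rw [hx1 i hc]; exact ht.2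
      have hlow := integral_aeconst (g := fun t => F {i | t < x i}) (a := 0) (b := 1/2)
        (c := F D) (by norm_num) hlevlow
      have hhigh := integral_aeconst (g := fun t => F {i | t < x i}) (a := 1/2) (b := 1)
        (c := F C) (by norm_num) hlevhigh
      rw [lovasz, hinf, hsup,
        integral_Ioc_split (by norm_num) (by norm_num) hlow.1 hhigh.1, hlow.2, hhigh.2]
      ring


end Aux

/-- A set function `F : 2^V → ℝ` with `F(∅) = 0` is submodular if and only if its Lovász
extension is convex. -/
theorem stmt_0 {N : ℕ} (F : Set (Fin N) → ℝ) (hF0 : F ∅ = 0) :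
    Submodular F ↔ ConvexOn ℝ Set.univ (lovasz F) := by
  rcases Nat.eq_zero_or_pos N with h0 | hN
  · subst h0
    have hlz : ∀ z : Fin 0 → ℝ, lovasz F z = 0 := by
      intro z
      have h1 : (⨅ i, z i) = 0 := Real.iInf_of_isEmpty z
      have h2 : (⨆ i, z i) = 0 := Real.iSup_of_isEmpty z
      rw [lovasz, h1, h2]
      simp
    constructor
    · intro _
      refine ⟨convex_univ, fun p _ q _ a b ha hb hab => ?_⟩
      simp [hlz]
    · intro _ A B
      have hA : A = ∅ := Set.eq_empty_of_isEmpty A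
      have hB : B = ∅ := Set.eq_empty_of_isEmpty B
      subst hA; subst hB
      simp [hF0]
  · constructor
    · intro hSub
      exact submodular_convex hN F hF0 hSub
    · intro hconv A B
      set x : Fin N → ℝ := fun i => if i ∈ A then (1:ℝ) else 0 with hxdef
      set y : Fin N → ℝ := fun i => if i ∈ B then (1:ℝ) else 0 with hydef
      have hkey := hconv.2 (Set.mem_univ x) (Set.mem_univ y)
        (by norm_num : (0:ℝ) ≤ 1/2) (by norm_num : (0:ℝ) ≤ 1/2) (by norm_num)
      have hfx : lovasz F x = F A := by
        have hx : x = fun i => ((if i ∈ A then (1:ℝ) else 0) + (if i ∈ A then 1 else 0))/2 := by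
          funext i; by_cases h : i ∈ A <;> simp [hxdef, h]
        rw [hx, lovasz_half hN F hF0 (subset_refl A)]
        ring
      have hfy : lovasz F y = F B := by
        have hy : y = fun i => ((if i ∈ B then (1:ℝ) else 0) + (if i ∈ B then 1 else 0))/2 := by
          funext i; by_cases h : i ∈ B <;> simp [hydef, h]
        rw [hy, lovasz_half hN F hF0 (subset_refl B)]
        ring
      have hmid : (1/2 : ℝ) • x + (1/2 : ℝ) • y =
          fun i => ((if i ∈ A ∪ B then (1:ℝ) else 0) + (if i ∈ A ∩ B then 1 else 0))/2 := by
        funext i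
        by_cases hA : i ∈ A <;> by_cases hB : i ∈ B <;>
          simp [hxdef, hydef, hA, hB, Set.mem_union, Set.mem_inter_iff] <;> norm_num
      have hfm : lovasz F ((1/2 : ℝ) • x + (1/2 : ℝ) • y) = (F (A ∪ B) + F (A ∩ B))/2 := by
        rw [hmid]
        have h := lovasz_half hN F hF0 (C := A ∩ B) (D := A ∪ B)
          ((Set.inter_subset_left).trans Set.subset_union_left)
        convert h using 2
        funext i
        by_cases h1 : i ∈ A ∪ B <;> by_cases h2 : i ∈ A ∩ B <;> simp [h1, h2]
      rw [hfm, hfx, hfy, smul_eq_mul, smul_eq_mul] at hkey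
      linarith
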